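/- Let u = (u1,u2,u3) ∈ ℝ³ with u1² + u2² + u3² = 1 and suppose P(u) = 1/3, where P(u) = -u2 u1² + (√3/2) u1 u3² + (1/3) u2³ + (1/2) u2 u3². Then (√3 u1 + u2)³ - 3(√3 u1 + u2) + 2 = 0, i.e. √3 u1 + u2 ∈ {1, -2}. -/
import Mathlib


/-- If |u| = 1 and P(u) = 1/3 then (√3 u1 + u2)³ - 3(√3 u1 + u2) + 2 = 0,
    i.e. √3 u1 + u2 ∈ {1, -2}. -/
theorem cubic_of_maximal_P (P : ℝ → ℝ → ℝ → ℝ)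
    (hP : ∀ v1 v2 v3 : ℝ, P v1 v2 v3 =
      -v2 * v1 ^ 2 + (Real.sqrt 3 / 2) * v1 * v3 ^ 2 + (1 / 3) * v2 ^ 3 + (1 / 2) * v2 * v3 ^ 2)
    (u1 u2 u3 : ℝ) (hunit : u1 ^ 2 + u2 ^ 2 + u3 ^ 2 = 1)
    (hmax : P u1 u2 u3 = 1 / 3) :
    (Real.sqrt 3 * u1 + u2) ^ 3 - 3 * (Real.sqrt 3 * u1 + u2) + 2 = 0 ∧
      (Real.sqrt 3 * u1 + u2 = 1 ∨ Real.sqrt 3 * u1 + u2 = -2) := by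
  have h3 : Real.sqrt 3 ^ 2 = 3 := Real.sq_sqrt (by norm_num)
  have he : -u2 * u1 ^ 2 + (Real.sqrt 3 / 2) * u1 * u3 ^ 2 + (1 / 3) * u2 ^ 3
      + (1 / 2) * u2 * u3 ^ 2 = 1 / 3 := by rw [← hP]; exact hmax
  have hcubic : (Real.sqrt 3 * u1 + u2) ^ 3 - 3 * (Real.sqrt 3 * u1 + u2) + 2 = 0 := by
    linear_combination (-6 : ℝ) * he + (3 * Real.sqrt 3 * u1 + 3 * u2) * hunit +
      (Real.sqrt 3 * u1 ^ 3 + 3 * u1 ^ 2 * u2) * h3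
  refine ⟨hcubic, ?_⟩
  have hfact : (Real.sqrt 3 * u1 + u2 - 1) ^ 2 * (Real.sqrt 3 * u1 + u2 + 2) = 0 := by
    linear_combination hcubic
  rcases mul_eq_zero.mp hfact with h | h
  · left; have := pow_eq_zero_iff (n := 2) (by norm_num) |>.mp h; linarith
  · right; linarith
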